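/- Let $\{\Sigma_n\}_n$ and $\{\Sigma'_n\}_n$ be sequences of diagonal matrices with nonnegative real entries such that both have singular value symbol $|k|$ for the same measurable $k$. If both also have the same spectral symbol $f$ (a nonnegative monotone rearrangement of $|k|$ on $[0,1]$), and there exist permutation matrices $P_n, P'_n$ with $\{P_n\Sigma_nP_n^T\}_n$ and $\{P'_n\Sigma'_n(P'_n)^T\}_n$ both acs equivalent (with the same symbol), then for any sequence $\{A_n\}_n\sim_\sigma k$ with SVD $A_n = Q'_n\Sigma'_nW'_n$ and any $\{B_n\}_n$ with SVD $B_n = Q_n\Sigma_nW_n$ satisfying $\{B_n\}_n\sim_\sigma k$, there exist unitary sequences $\{U_n\}_n, \{V_n\}_n$ such that $\{B_n - U_nA_nV_n\}_n$ is zero-distributed. -/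

import Mathlib

open MeasureTheory Filter Matrix

noncomputable def singVals {n : ℕ} (A : Matrix (Fin n) (Fin n) ℂ) : Fin n → ℝ :=
  fun i => Real.sqrt ((Matrix.isHermitian_conjTranspose_mul_self A).eigenvalues i)

/-- `A ∼_σ k` on the domain `Dset`: singular value distribution. -/
def SingSymb {α : Type*} [MeasureSpace α] (Dset : Set α)
    (A : ∀ n : ℕ, Matrix (Fin n) (Fin n) ℂ) (k : α → ℂ) : Prop :=
  ∀ F : C(ℝ, ℂ), HasCompactSupport F →
    Tendsto (fun n : ℕ => (n : ℂ)⁻¹ * ∑ i, F (singVals (A n) i)) atTop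
      (nhds (((volume Dset).toReal)⁻¹ • ∫ x in Dset, F ‖k x‖))

/-- `A ∼_λ k` on the domain `Dset`: eigenvalue (Weyl) distribution, where the
eigenvalues of `A n` (with multiplicity) are the roots of its characteristic polynomial. -/
def SpecSymb {α : Type*} [MeasureSpace α] (Dset : Set α)
    (A : ∀ n : ℕ, Matrix (Fin n) (Fin n) ℂ) (k : α → ℂ) : Prop :=
  ∀ F : C(ℂ, ℂ), HasCompactSupport F →
    Tendsto (fun n : ℕ =>
        (n : ℂ)⁻¹ * (Multiset.map (fun z => F z) (A n).charpoly.roots).sum) atTop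
      (nhds (((volume Dset).toReal)⁻¹ • ∫ x in Dset, F (k x)))

/-- Zero-distributed sequence: `A ∼_σ 0`. -/
def ZeroDist (A : ∀ n : ℕ, Matrix (Fin n) (Fin n) ℂ) : Prop :=
  ∀ F : C(ℝ, ℂ), HasCompactSupport F →
    Tendsto (fun n : ℕ => (n : ℂ)⁻¹ * ∑ i, F (singVals (A n) i)) atTop (nhds (F 0))

/-- The permutation matrix of `p : Equiv.Perm (Fin n)`. -/
def permMat {n : ℕ} (p : Equiv.Perm (Fin n)) : Matrix (Fin n) (Fin n) ℂ :=
  fun i j => if p j = i then 1 else 0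

open Polynomial
section


section Aux

variable {n : ℕ}

/-- Charpoly is invariant under unitary conjugation. -/
lemma charpoly_star_conj (H : Matrix (Fin n) (Fin n) ℂ) (V : Matrix (Fin n) (Fin n) ℂ)
    (hV : V ∈ Matrix.unitaryGroup (Fin n) ℂ) :
    (star V * H * V).charpoly = H.charpoly := by
  have h1 : star V * V = 1 := hV.1
  have hm1 : (star V).map (⇑(C : ℂ →+* ℂ[X])) * V.map (⇑(C : ℂ →+* ℂ[X])) = 1 := by
    rw [← Matrix.map_mul (f := (C : ℂ →+* ℂ[X])), h1]
    simp
  have key : charmatrix (star V * H * V) =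
      (star V).map (⇑(C : ℂ →+* ℂ[X])) * charmatrix H * V.map (⇑(C : ℂ →+* ℂ[X])) := by
    unfold charmatrix
    rw [mul_sub, sub_mul]
    congr 1
    · have : (star V).map (⇑(C : ℂ →+* ℂ[X])) * Matrix.scalar (Fin n) (X : ℂ[X]) =
          Matrix.scalar (Fin n) (X : ℂ[X]) * (star V).map (⇑(C : ℂ →+* ℂ[X])) := by
        rw [Matrix.scalar_commute]
        intro r
        exact Polynomial.commute_X r
      rw [this, mul_assoc, hm1, mul_one]
    · simp only [RingHom.mapMatrix_apply]
      rw [← Matrix.map_mul (f := (C : ℂ →+* ℂ[X])), ← Matrix.map_mul (f := (C : ℂ →+* ℂ[X]))]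
  unfold Matrix.charpoly
  rw [key, Matrix.det_mul, Matrix.det_mul, mul_comm ((star V).map _).det, mul_assoc,
    ← Matrix.det_mul, hm1, Matrix.det_one, mul_one]

/-- The charpoly of a Hermitian matrix in terms of its eigenvalues. -/
lemma hermitian_charpoly_eq {H : Matrix (Fin n) (Fin n) ℂ} (hH : H.IsHermitian) :
    H.charpoly = ∏ i, (X - C ((hH.eigenvalues i : ℂ))) := by
  have h2 := charpoly_star_conj H (hH.eigenvectorUnitary : Matrix (Fin n) (Fin n) ℂ)
    (hH.eigenvectorUnitary).2
  rw [show star (hH.eigenvectorUnitary : Matrix (Fin n) (Fin n) ℂ) * H *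
      (hH.eigenvectorUnitary : Matrix (Fin n) (Fin n) ℂ) =
      Matrix.diagonal (RCLike.ofReal ∘ hH.eigenvalues) by
    have := hH.conjStarAlgAut_star_eigenvectorUnitary
    simpa [Unitary.conjStarAlgAut_apply] using this] at h2
  rw [← h2, Matrix.charpoly_of_upperTriangular _ (Matrix.blockTriangular_diagonal _)]
  simp [Matrix.diagonal_apply_eq]

/-- Eigenvalue multisets of two Hermitian matrices with equal charpoly agree. -/
lemma eigenvalues_multiset_eq {H₁ H₂ : Matrix (Fin n) (Fin n) ℂ}
    (hH₁ : H₁.IsHermitian) (hH₂ : H₂.IsHermitian) (h : H₁.charpoly = H₂.charpoly) :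
    Finset.univ.val.map (fun i => ((hH₁.eigenvalues i : ℂ))) =
      Finset.univ.val.map (fun i => ((hH₂.eigenvalues i : ℂ))) := by
  have aux : ∀ (H : Matrix (Fin n) (Fin n) ℂ) (hH : H.IsHermitian),
      H.charpoly.roots = Finset.univ.val.map (fun i => ((hH.eigenvalues i : ℂ))) := by
    intro H hH
    rw [hermitian_charpoly_eq hH, Finset.prod_eq_multiset_prod]
    have : Multiset.map (fun i => X - C ((hH.eigenvalues i : ℂ))) Finset.univ.val =
        Multiset.map (fun a => X - C a)
          (Finset.univ.val.map (fun i => ((hH.eigenvalues i : ℂ)))) := by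
      rw [Multiset.map_map]; rfl
    rw [this, Polynomial.roots_multiset_prod_X_sub_C]
  rw [← aux H₁ hH₁, ← aux H₂ hH₂, h]

end Aux

section Aux2
variable {n : ℕ}

lemma permMat_conjTranspose (p : Equiv.Perm (Fin n)) :
    (permMat p)ᴴ = (permMat p)ᵀ := by
  ext i j
  simp [permMat, Matrix.conjTranspose_apply, Matrix.transpose_apply, apply_ite]

lemma permMat_mem (p : Equiv.Perm (Fin n)) : permMat p ∈ Matrix.unitaryGroup (Fin n) ℂ := by
  rw [Matrix.mem_unitaryGroup_iff]
  ext i j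
  simp only [Matrix.mul_apply, Matrix.star_eq_conjTranspose, permMat_conjTranspose,
    Matrix.transpose_apply, permMat, Matrix.one_apply]
  rw [Finset.sum_eq_single (p.symm i)]
  · by_cases h : i = j <;> simp [h, Equiv.apply_eq_iff_eq_symm_apply, eq_comm]
  · intro b _ hb
    have : ¬ p b = i := fun hc => hb (by simp [← hc])
    simp [this]
  · simp

lemma sum_singVals_unitary_mul (X U V : Matrix (Fin n) (Fin n) ℂ)
    (hU : U ∈ Matrix.unitaryGroup (Fin n) ℂ) (hV : V ∈ Matrix.unitaryGroup (Fin n) ℂ)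
    (F : ℝ → ℂ) :
    ∑ i, F (singVals (U * X * V) i) = ∑ i, F (singVals X i) := by
  have hH1 := Matrix.isHermitian_conjTranspose_mul_self X
  have hH2 := Matrix.isHermitian_conjTranspose_mul_self (U * X * V)
  have hU1 : Uᴴ * U = 1 := by simpa [Matrix.star_eq_conjTranspose] using hU.1
  have heq : (U * X * V)ᴴ * (U * X * V) = star V * (Xᴴ * X) * V := by
    simp only [Matrix.conjTranspose_mul, Matrix.star_eq_conjTranspose]
    calc Vᴴ * (Xᴴ * Uᴴ) * (U * X * V) = Vᴴ * Xᴴ * (Uᴴ * U) * X * V := by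
          simp only [Matrix.mul_assoc]
      _ = Vᴴ * (Xᴴ * X) * V := by rw [hU1]; simp only [Matrix.mul_one, Matrix.mul_assoc]
  have hc : ((U * X * V)ᴴ * (U * X * V)).charpoly = (Xᴴ * X).charpoly := by
    rw [heq]; exact charpoly_star_conj _ V hV
  have hmul := eigenvalues_multiset_eq hH2 hH1 hc
  have key : ∀ (H : Matrix (Fin n) (Fin n) ℂ) (hH : H.IsHermitian),
      (∑ i, F (Real.sqrt (hH.eigenvalues i))) =
        ((Finset.univ.val.map (fun i => ((hH.eigenvalues i : ℂ)))).map
          (fun z : ℂ => F (Real.sqrt z.re))).sum := by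
    intro H hH
    rw [Multiset.map_map, Finset.sum]
    congr 1
  show (∑ i, F (Real.sqrt (hH2.eigenvalues i))) = (∑ i, F (Real.sqrt (hH1.eigenvalues i)))
  rw [key _ hH2, key _ hH1, hmul]

lemma mul_cancel_left {M N : Matrix (Fin n) (Fin n) ℂ} (h : M * N = 1)
    (x : Matrix (Fin n) (Fin n) ℂ) : M * (N * x) = x := by
  rw [← Matrix.mul_assoc, h, Matrix.one_mul]

end Aux2

end

/-- Core computation of the cyclic-group embedding: if the SVD factors `Σ_n`,
`Σ'_n` of `B_n` and `A_n` (both `∼_σ k`, with common spectral symbol `f`, a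
nonnegative monotone rearrangement of `|k|` on `[0,1]`) can be matched by
permutations up to a zero-distributed error, then there are unitary sequences
`{U_n}`, `{V_n}` with `{B_n - U_n A_n V_n}` zero-distributed. -/

theorem svd_two_sided_unitary_matching {q : ℕ}
    (Dset : Set (EuclideanSpace ℝ (Fin q))) (hD0 : 0 < volume Dset) (hD1 : volume Dset < ⊤)
    (k : EuclideanSpace ℝ (Fin q) → ℂ)
    (σd σd' : ∀ n : ℕ, Fin n → ℝ)
    (hσ : ∀ n i, 0 ≤ σd n i) (hσ' : ∀ n i, 0 ≤ σd' n i)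
    (hSig1 : SingSymb Dset (fun n => Matrix.diagonal (fun i => (σd n i : ℂ))) k)
    (hSig2 : SingSymb Dset (fun n => Matrix.diagonal (fun i => (σd' n i : ℂ))) k)
    (f : ℝ → ℝ) (hf0 : ∀ x, 0 ≤ f x) (hfmono : MonotoneOn f (Set.Icc 0 1))
    (hfSig1 : SpecSymb (Set.Icc (0:ℝ) 1)
      (fun n => Matrix.diagonal (fun i => (σd n i : ℂ))) (fun x => (f x : ℂ)))
    (hfSig2 : SpecSymb (Set.Icc (0:ℝ) 1)
      (fun n => Matrix.diagonal (fun i => (σd' n i : ℂ))) (fun x => (f x : ℂ)))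
    (p p' : ∀ n : ℕ, Equiv.Perm (Fin n))
    (hperm : ZeroDist (fun n =>
        permMat (p n) * Matrix.diagonal (fun i => (σd n i : ℂ)) * (permMat (p n))ᵀ -
        permMat (p' n) * Matrix.diagonal (fun i => (σd' n i : ℂ)) * (permMat (p' n))ᵀ))
    (A B Q W Q' W' : ∀ n : ℕ, Matrix (Fin n) (Fin n) ℂ)
    (hQ : ∀ n, Q n ∈ Matrix.unitaryGroup (Fin n) ℂ)
    (hW : ∀ n, W n ∈ Matrix.unitaryGroup (Fin n) ℂ)
    (hQ' : ∀ n, Q' n ∈ Matrix.unitaryGroup (Fin n) ℂ)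
    (hW' : ∀ n, W' n ∈ Matrix.unitaryGroup (Fin n) ℂ)
    (hBsvd : ∀ n, B n = Q n * Matrix.diagonal (fun i => (σd n i : ℂ)) * W n)
    (hAsvd : ∀ n, A n = Q' n * Matrix.diagonal (fun i => (σd' n i : ℂ)) * W' n)
    (hAk : SingSymb Dset A k) (hBk : SingSymb Dset B k) :
    ∃ U V : ∀ n : ℕ, Matrix (Fin n) (Fin n) ℂ,
      (∀ n, U n ∈ Matrix.unitaryGroup (Fin n) ℂ) ∧
      (∀ n, V n ∈ Matrix.unitaryGroup (Fin n) ℂ) ∧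
      ZeroDist (fun n => B n - U n * A n * V n) := by
  refine ⟨fun n => Q n * (permMat (p n))ᵀ * permMat (p' n) * (Q' n)ᴴ,
    fun n => (W' n)ᴴ * (permMat (p' n))ᵀ * permMat (p n) * W n, ?_, ?_, ?_⟩
  · intro n
    dsimp only
    rw [← permMat_conjTranspose, ← Matrix.star_eq_conjTranspose,
      ← Matrix.star_eq_conjTranspose]
    exact mul_mem (mul_mem (mul_mem (hQ n) (Unitary.star_mem (permMat_mem (p n))))
      (permMat_mem (p' n))) (Unitary.star_mem (hQ' n))
  · intro n
    dsimp only
    rw [← permMat_conjTranspose, ← Matrix.star_eq_conjTranspose,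
      ← Matrix.star_eq_conjTranspose]
    exact mul_mem (mul_mem (mul_mem (Unitary.star_mem (hW' n))
      (Unitary.star_mem (permMat_mem (p' n)))) (permMat_mem (p n))) (hW n)
  · intro F hF
    have key : ∀ n,
        B n - (Q n * (permMat (p n))ᵀ * permMat (p' n) * (Q' n)ᴴ) * A n *
          ((W' n)ᴴ * (permMat (p' n))ᵀ * permMat (p n) * W n) =
        (Q n * (permMat (p n))ᵀ) *
          (permMat (p n) * Matrix.diagonal (fun i => (σd n i : ℂ)) * (permMat (p n))ᵀ -
            permMat (p' n) * Matrix.diagonal (fun i => (σd' n i : ℂ)) * (permMat (p' n))ᵀ) *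
          (permMat (p n) * W n) := by
      intro n
      have hPtP : (permMat (p n))ᵀ * permMat (p n) = 1 := by
        rw [← permMat_conjTranspose, ← Matrix.star_eq_conjTranspose]
        exact (permMat_mem (p n)).1
      have hP'tP' : (permMat (p' n))ᵀ * permMat (p' n) = 1 := by
        rw [← permMat_conjTranspose, ← Matrix.star_eq_conjTranspose]
        exact (permMat_mem (p' n)).1
      have hQ'Q' : (Q' n)ᴴ * Q' n = 1 := by
        rw [← Matrix.star_eq_conjTranspose]; exact (hQ' n).1
      have hW'W' : W' n * (W' n)ᴴ = 1 := by
        rw [← Matrix.star_eq_conjTranspose]; exact (hW' n).2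
      rw [hAsvd n, hBsvd n, Matrix.mul_sub, Matrix.sub_mul]
      simp only [Matrix.mul_assoc]
      rw [mul_cancel_left hPtP, mul_cancel_left hPtP, mul_cancel_left hQ'Q',
        mul_cancel_left hW'W']
    refine (hperm F hF).congr fun n => ?_
    dsimp only
    rw [key n]
    exact congrArg (fun z => ((n : ℂ))⁻¹ * z) (sum_singVals_unitary_mul _ _ _
      (by rw [← permMat_conjTranspose, ← Matrix.star_eq_conjTranspose]
          exact mul_mem (hQ n) (Unitary.star_mem (permMat_mem (p n))))
      (mul_mem (permMat_mem (p n)) (hW n)) F).symm
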